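/- Suppose a 4-dimensional locally conformal flat Riemannian manifold has Ricci eigenvalues satisfying r₁ = r₂ ≠ r₃ = r₄ on an open set, and is a P-space there (so equations (7): E_i(r_k) = E_i(r_j), (8): E_i(r_i) = 3(E_i(r_k) − 2(∇_kρ)_{ki}), and (9): (r_i − r_l)(E_i(r_i) − E_i(r_k) − 2(∇_kρ)_{ki}) = 0 hold for all distinct indices). Then all four Ricci eigenvalues are locally constant. -/
import Mathlib


/-- abstract frame formulation of Case C. `r i` are the Ricci eigenvalue
functions on `M` in an orthonormal eigenframe `E_0,…,E_3`, `dr i j` stands for the frame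
derivative `E_i(r_j)` (so equal eigenvalue functions have equal derivatives), and
`Dρ k i = (∇_{E_k}ρ)(E_k,E_i)`. If `r₁ = r₂ ≠ r₃ = r₄` and the P-space equations
(7) `E_i(r_k) = E_i(r_j)`, (8) `E_i(r_i) = 3(E_i(r_k) − 2(∇_kρ)_{ki})` and
(9) `(r_i − r_l)(E_i(r_i) − E_i(r_k) − 2(∇_kρ)_{ki}) = 0` hold for all distinct indices,
then all four Ricci eigenvalues are (locally) constant, i.e. all frame derivatives vanish. -/
theorem stmt15 {M : Type*} (r : Fin 4 → M → ℝ)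
    (dr : Fin 4 → Fin 4 → M → ℝ) (Dρ : Fin 4 → Fin 4 → M → ℝ)
    (hr01 : r 0 = r 1) (hr23 : r 2 = r 3) (hne : ∀ p, r 0 p ≠ r 2 p)
    (hdr01 : ∀ i, dr i 0 = dr i 1) (hdr23 : ∀ i, dr i 2 = dr i 3)
    (h7 : ∀ i j k l : Fin 4, i ≠ j → i ≠ k → i ≠ l → j ≠ k → j ≠ l → k ≠ l →
      ∀ p, dr i k p = dr i j p)
    (h8 : ∀ i j k l : Fin 4, i ≠ j → i ≠ k → i ≠ l → j ≠ k → j ≠ l → k ≠ l →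
      ∀ p, dr i i p = 3 * (dr i k p - 2 * Dρ k i p))
    (h9 : ∀ i j k l : Fin 4, i ≠ j → i ≠ k → i ≠ l → j ≠ k → j ≠ l → k ≠ l →
      ∀ p, (r i p - r l p) * (dr i i p - dr i k p - 2 * Dρ k i p) = 0) :
    ∀ i j : Fin 4, ∀ p, dr i j p = 0 := by
  intro i j p
  have hr01p : r 0 p = r 1 p := congrFun hr01 p
  have hr23p : r 2 p = r 3 p := congrFun hr23 p
  have hnep : r 0 p ≠ r 2 p := hne p
  fin_cases i
  · -- i = 0 : use (j,k,l) = (1,2,3)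
    have f1 : dr 0 0 p = dr 0 1 p := congrFun (hdr01 0) p
    have f2 : dr 0 2 p = dr 0 1 p := h7 0 1 2 3 (by decide) (by decide) (by decide)
      (by decide) (by decide) (by decide) p
    have f3 : dr 0 2 p = dr 0 3 p := congrFun (hdr23 0) p
    have f4 : dr 0 0 p = 3 * (dr 0 2 p - 2 * Dρ 2 0 p) := h8 0 1 2 3 (by decide)
      (by decide) (by decide) (by decide) (by decide) (by decide) p
    have f5 : (r 0 p - r 3 p) * (dr 0 0 p - dr 0 2 p - 2 * Dρ 2 0 p) = 0 :=
      h9 0 1 2 3 (by decide) (by decide) (by decide) (by decide) (by decide) (by decide) p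
    have hnz : r 0 p - r 3 p ≠ 0 := sub_ne_zero.mpr (hr23p ▸ hnep)
    have f6 : dr 0 0 p - dr 0 2 p - 2 * Dρ 2 0 p = 0 :=
      (mul_eq_zero.mp f5).resolve_left hnz
    fin_cases j
    · show dr 0 0 p = 0; linarith
    · show dr 0 1 p = 0; linarith
    · show dr 0 2 p = 0; linarith
    · show dr 0 3 p = 0; linarith
  · -- i = 1 : use (j,k,l) = (0,2,3)
    have f1 : dr 1 0 p = dr 1 1 p := congrFun (hdr01 1) p
    have f2 : dr 1 2 p = dr 1 0 p := h7 1 0 2 3 (by decide) (by decide) (by decide)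
      (by decide) (by decide) (by decide) p
    have f3 : dr 1 2 p = dr 1 3 p := congrFun (hdr23 1) p
    have f4 : dr 1 1 p = 3 * (dr 1 2 p - 2 * Dρ 2 1 p) := h8 1 0 2 3 (by decide)
      (by decide) (by decide) (by decide) (by decide) (by decide) p
    have f5 : (r 1 p - r 3 p) * (dr 1 1 p - dr 1 2 p - 2 * Dρ 2 1 p) = 0 :=
      h9 1 0 2 3 (by decide) (by decide) (by decide) (by decide) (by decide) (by decide) p
    have hnz : r 1 p - r 3 p ≠ 0 := sub_ne_zero.mpr (hr01p ▸ hr23p ▸ hnep)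
    have f6 : dr 1 1 p - dr 1 2 p - 2 * Dρ 2 1 p = 0 :=
      (mul_eq_zero.mp f5).resolve_left hnz
    fin_cases j
    · show dr 1 0 p = 0; linarith
    · show dr 1 1 p = 0; linarith
    · show dr 1 2 p = 0; linarith
    · show dr 1 3 p = 0; linarith
  · -- i = 2 : use (j,k,l) = (3,0,1)
    have f1 : dr 2 2 p = dr 2 3 p := congrFun (hdr23 2) p
    have f2 : dr 2 0 p = dr 2 3 p := h7 2 3 0 1 (by decide) (by decide) (by decide)
      (by decide) (by decide) (by decide) p
    have f3 : dr 2 0 p = dr 2 1 p := congrFun (hdr01 2) p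
    have f4 : dr 2 2 p = 3 * (dr 2 0 p - 2 * Dρ 0 2 p) := h8 2 3 0 1 (by decide)
      (by decide) (by decide) (by decide) (by decide) (by decide) p
    have f5 : (r 2 p - r 1 p) * (dr 2 2 p - dr 2 0 p - 2 * Dρ 0 2 p) = 0 :=
      h9 2 3 0 1 (by decide) (by decide) (by decide) (by decide) (by decide) (by decide) p
    have hnz : r 2 p - r 1 p ≠ 0 := sub_ne_zero.mpr (fun h => hnep (by linarith))
    have f6 : dr 2 2 p - dr 2 0 p - 2 * Dρ 0 2 p = 0 :=
      (mul_eq_zero.mp f5).resolve_left hnz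
    fin_cases j
    · show dr 2 0 p = 0; linarith
    · show dr 2 1 p = 0; linarith
    · show dr 2 2 p = 0; linarith
    · show dr 2 3 p = 0; linarith
  · -- i = 3 : use (j,k,l) = (2,0,1)
    have f1 : dr 3 2 p = dr 3 3 p := congrFun (hdr23 3) p
    have f2 : dr 3 0 p = dr 3 2 p := h7 3 2 0 1 (by decide) (by decide) (by decide)
      (by decide) (by decide) (by decide) p
    have f3 : dr 3 0 p = dr 3 1 p := congrFun (hdr01 3) p
    have f4 : dr 3 3 p = 3 * (dr 3 0 p - 2 * Dρ 0 3 p) := h8 3 2 0 1 (by decide)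
      (by decide) (by decide) (by decide) (by decide) (by decide) p
    have f5 : (r 3 p - r 1 p) * (dr 3 3 p - dr 3 0 p - 2 * Dρ 0 3 p) = 0 :=
      h9 3 2 0 1 (by decide) (by decide) (by decide) (by decide) (by decide) (by decide) p
    have hnz : r 3 p - r 1 p ≠ 0 := sub_ne_zero.mpr (fun h => hnep (by linarith))
    have f6 : dr 3 3 p - dr 3 0 p - 2 * Dρ 0 3 p = 0 :=
      (mul_eq_zero.mp f5).resolve_left hnz
    fin_cases j
    · show dr 3 0 p = 0; linarith
    · show dr 3 1 p = 0; linarith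
    · show dr 3 2 p = 0; linarith
    · show dr 3 3 p = 0; linarith
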